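/- Let (ω_t)_{t≥0} be i.i.d. real-valued random variables taking values in [0,1] with common mean μ, and let (α_t)_{t≥0} be a sequence of reals with α_t ∈ (0,1) for all t, Σ_t α_t = ∞ and Σ_t α_t² < ∞. Define Γ_0 = γ0 for a deterministic γ0 ∈ [0,1] and Γ_{t+1} = (1−α_t)·Γ_t + α_t·ω_t. Then Γ_t converges to μ in L², i.e. E[(Γ_t − μ)²] → 0 as t → ∞. -/

import Mathlib

open MeasureTheory ProbabilityTheory Filter


lemma rm_aux_tendsto_zero (α b e : ℕ → ℝ) (hα : ∀ t, α t ∈ Set.Ioo (0:ℝ) 1)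
    (hdiv : ¬ Summable α) (hb0 : ∀ t, 0 ≤ b t) (hbsum : Summable b)
    (he0 : ∀ t, 0 ≤ e t) (hrec : ∀ t, e (t+1) ≤ (1 - α t) * e t + b t) :
    Tendsto e atTop (nhds 0) := by
  rw [Metric.tendsto_atTop]
  intro ε hε
  -- choose N with tail sum small
  have htail : Tendsto (fun N => ∑' k, b (k + N)) atTop (nhds 0) :=
    tendsto_sum_nat_add b
  obtain ⟨N, hN⟩ : ∃ N, ∑' k, b (k + N) < ε / 3 := by
    obtain ⟨N, hN⟩ := Metric.tendsto_atTop.mp htail (ε/3) (by linarith)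
    have := hN N le_rfl
    rw [Real.dist_eq, sub_zero] at this
    exact ⟨N, lt_of_le_of_lt (le_abs_self _) this⟩
  have hbtail : Summable (fun k => b (k + N)) := (summable_nat_add_iff N).2 hbsum
  -- partial tail sums bounded by tail tsum
  have hpart : ∀ k, ∑ i ∈ Finset.range k, b (N + i) ≤ ∑' k, b (k + N) := by
    intro k
    have := Summable.sum_le_tsum (Finset.range k) (fun i _ => hb0 _) hbtail
    simpa [add_comm] using this
  -- key induction
  have key : ∀ k, e (N + k) ≤ (∏ i ∈ Finset.range k, (1 - α (N + i))) * e N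
      + ∑ i ∈ Finset.range k, b (N + i) := by
    intro k
    induction k with
    | zero => simp
    | succ k ih =>
      have h1 : e (N + (k+1)) ≤ (1 - α (N + k)) * e (N + k) + b (N + k) := hrec (N + k)
      have h2 : (1 - α (N + k)) * e (N + k) ≤
          (1 - α (N + k)) * ((∏ i ∈ Finset.range k, (1 - α (N + i))) * e N
            + ∑ i ∈ Finset.range k, b (N + i)) := by
        apply mul_le_mul_of_nonneg_left ih
        have := (hα (N + k)).2; linarith
      have hsum0 : 0 ≤ ∑ i ∈ Finset.range k, b (N + i) :=
        Finset.sum_nonneg fun i _ => hb0 _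
      have hαk := hα (N + k)
      calc e (N + (k+1)) ≤ (1 - α (N + k)) * e (N + k) + b (N + k) := h1
        _ ≤ (1 - α (N + k)) * ((∏ i ∈ Finset.range k, (1 - α (N + i))) * e N
            + ∑ i ∈ Finset.range k, b (N + i)) + b (N + k) := by linarith
        _ ≤ (∏ i ∈ Finset.range (k+1), (1 - α (N + i))) * e N
            + ∑ i ∈ Finset.range (k+1), b (N + i) := by
          rw [Finset.prod_range_succ, Finset.sum_range_succ]
          have h3 : (1 - α (N + k)) * (∑ i ∈ Finset.range k, b (N + i))
              ≤ ∑ i ∈ Finset.range k, b (N + i) := by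
            nlinarith [hαk.1, hαk.2]
          ring_nf
          nlinarith [hαk.1, hαk.2]
  -- the product tends to 0
  have hprod0 : Tendsto (fun k => (∏ i ∈ Finset.range k, (1 - α (N + i))) * e N)
      atTop (nhds 0) := by
    have hSdiv : Tendsto (fun k => ∑ i ∈ Finset.range k, α (N + i)) atTop atTop := by
      have hns : ¬ Summable (fun i => α (N + i)) := by
        intro h
        exact hdiv ((summable_nat_add_iff N).1 (by simpa [add_comm] using h))
      exact (not_summable_iff_tendsto_nat_atTop_of_nonneg
        (fun i => (hα (N + i)).1.le)).1 hns
    have hexp : Tendsto (fun k => Real.exp (-(∑ i ∈ Finset.range k, α (N + i))))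
        atTop (nhds 0) :=
      Real.tendsto_exp_atBot.comp (tendsto_neg_atTop_atBot.comp hSdiv)
    have hsq : ∀ k, (∏ i ∈ Finset.range k, (1 - α (N + i))) * e N
        ≤ Real.exp (-(∑ i ∈ Finset.range k, α (N + i))) * e N := by
      intro k
      apply mul_le_mul_of_nonneg_right _ (he0 N)
      calc (∏ i ∈ Finset.range k, (1 - α (N + i)))
          ≤ ∏ i ∈ Finset.range k, Real.exp (-(α (N + i))) := by
            apply Finset.prod_le_prod
            · intro i _; have := (hα (N + i)).2; linarith
            · intro i _
              have := Real.add_one_le_exp (-(α (N + i)))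
              linarith
        _ = Real.exp (-(∑ i ∈ Finset.range k, α (N + i))) := by
            rw [← Real.exp_sum]; congr 1; rw [Finset.sum_neg_distrib]
    have hge : ∀ k, 0 ≤ (∏ i ∈ Finset.range k, (1 - α (N + i))) * e N := by
      intro k
      apply mul_nonneg _ (he0 N)
      apply Finset.prod_nonneg
      intro i _; have := (hα (N + i)).2; linarith
    have h2 : Tendsto (fun k => Real.exp (-(∑ i ∈ Finset.range k, α (N + i))) * e N)
        atTop (nhds 0) := by simpa using hexp.mul_const (e N)
    exact squeeze_zero hge hsq h2
  obtain ⟨K, hK⟩ := (Metric.tendsto_atTop.mp hprod0 (ε/3) (by linarith))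
  refine ⟨N + K, fun n hn => ?_⟩
  have hnN : N ≤ n := le_trans (Nat.le_add_right N K) hn
  obtain ⟨k, rfl⟩ : ∃ k, n = N + k := ⟨n - N, by omega⟩
  have hkK : K ≤ k := by omega
  have hK' := hK k hkK
  have hprodlt : (∏ i ∈ Finset.range k, (1 - α (N + i))) * e N < ε / 3 := by
    rw [Real.dist_eq, sub_zero] at hK'
    exact lt_of_le_of_lt (le_abs_self _) hK'
  have := key k
  have hbd : e (N + k) < ε := by
    have := hpart k
    linarith [hN]
  rw [Real.dist_eq, sub_zero, abs_of_nonneg (he0 _)]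
  linarith


noncomputable def gwAux (α : ℕ → ℝ) (γ0 : ℝ) : ℕ → (ℕ → ℝ) → ℝ
  | 0 => fun _ => γ0
  | (t+1) => fun v => (1 - α t) * gwAux α γ0 t v + α t * v t

lemma gwAux_measurable (α : ℕ → ℝ) (γ0 : ℝ) (t : ℕ) : Measurable (gwAux α γ0 t) := by
  induction t with
  | zero => exact measurable_const
  | succ t ih =>
    exact (measurable_const.mul ih).add (measurable_const.mul (measurable_pi_apply t))

lemma gwAux_congr (α : ℕ → ℝ) (γ0 : ℝ) (t : ℕ) (v w : ℕ → ℝ)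
    (h : ∀ i < t, v i = w i) : gwAux α γ0 t v = gwAux α γ0 t w := by
  induction t with
  | zero => rfl
  | succ t ih =>
    simp only [gwAux, ih (fun i hi => h i (Nat.lt_succ_of_lt hi)),
      h t (Nat.lt_succ_self t)]

theorem gw_indep
    {Ω : Type*} [MeasurableSpace Ω] (P : Measure Ω) [IsProbabilityMeasure P]
    (ω : ℕ → Ω → ℝ) (hmeas : ∀ t, Measurable (ω t))
    (hindep : iIndepFun ω P)
    (α : ℕ → ℝ) (γ0 : ℝ)
    (Γ : ℕ → Ω → ℝ) (hΓ0 : ∀ x, Γ 0 x = γ0)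
    (hΓ : ∀ t x, Γ (t + 1) x = (1 - α t) * Γ t x + α t * ω t x) (t : ℕ) :
    IndepFun (Γ t) (ω t) P := by
  -- Γ t is gwAux of the history
  have hrepr : ∀ s x, Γ s x = gwAux α γ0 s (fun i => ω i x) := by
    intro s
    induction s with
    | zero => intro x; simpa [gwAux] using hΓ0 x
    | succ s ih => intro x; simp [gwAux, hΓ s x, ih x]
  classical
  have hdisj : Disjoint (Finset.range t) ({t} : Finset ℕ) := by
    simp [Finset.disjoint_left]; omega
  have hbase := hindep.indepFun_finset (Finset.range t) {t} hdisj hmeas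
  set φ : ((i : (Finset.range t : Finset ℕ)) → ℝ) → ℝ :=
    fun v => gwAux α γ0 t (fun i => if h : i ∈ Finset.range t then v ⟨i, h⟩ else 0) with hφdef
  set ψ : ((i : ({t} : Finset ℕ)) → ℝ) → ℝ :=
    fun v => v ⟨t, Finset.mem_singleton_self t⟩ with hψdef
  have hφ : Measurable φ := by
    apply (gwAux_measurable α γ0 t).comp
    apply measurable_pi_lambda
    intro i
    by_cases h : i ∈ Finset.range t
    · simpa [h] using measurable_pi_apply (⟨i, h⟩ : (Finset.range t : Finset ℕ))
    · simpa [h] using (measurable_const : Measurable fun _ : ((i : (Finset.range t : Finset ℕ)) → ℝ) => (0:ℝ))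
  have hψ : Measurable ψ := measurable_pi_apply _
  have := hbase.comp hφ hψ
  have heq1 : (φ ∘ fun a (i : (Finset.range t : Finset ℕ)) => ω i a) = Γ t := by
    funext x
    simp only [Function.comp_apply, hφdef, hrepr t x]
    apply gwAux_congr
    intro i hi
    simp [Finset.mem_range.mpr hi]
  have heq2 : (ψ ∘ fun a (i : ({t} : Finset ℕ)) => ω i a) = ω t := by
    funext x; rfl
  rwa [heq1, heq2] at this

/-- FedGWC Theorem 1 (L² convergence): for i.i.d. rewards `ω t` in `[0,1]` with mean `μ`
and Robbins–Monro step sizes `α t ∈ (0,1)` with `∑ α t = ∞` and `∑ (α t)² < ∞`, the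
Gaussian weight process `Γ (t+1) = (1 - α t) * Γ t + α t * ω t`, `Γ 0 = γ0`, converges
to `μ` in `L²`, i.e. `E[(Γ t - μ)²] → 0`. -/
theorem gaussian_weights_L2_convergence
    {Ω : Type*} [MeasurableSpace Ω] (P : Measure Ω) [IsProbabilityMeasure P]
    (ω : ℕ → Ω → ℝ) (hmeas : ∀ t, Measurable (ω t))
    (hindep : iIndepFun ω P)
    (hident : ∀ t, IdentDistrib (ω t) (ω 0) P P)
    (hrange : ∀ t, ∀ᵐ x ∂P, ω t x ∈ Set.Icc (0 : ℝ) 1)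
    (μ : ℝ) (hmean : ∀ t, ∫ x, ω t x ∂P = μ)
    (α : ℕ → ℝ) (hα : ∀ t, α t ∈ Set.Ioo (0 : ℝ) 1)
    (hdiv : ¬ Summable α) (hsq : Summable (fun t => (α t) ^ 2))
    (γ0 : ℝ) (hγ0 : γ0 ∈ Set.Icc (0 : ℝ) 1)
    (Γ : ℕ → Ω → ℝ) (hΓ0 : ∀ x, Γ 0 x = γ0)
    (hΓ : ∀ t x, Γ (t + 1) x = (1 - α t) * Γ t x + α t * ω t x) :
    Tendsto (fun t => ∫ x, (Γ t x - μ) ^ 2 ∂P) atTop (nhds 0) := by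
  -- measurability of Γ
  have hmeasΓ : ∀ t, Measurable (Γ t) := by
    intro t
    induction t with
    | zero =>
      have : Γ 0 = fun _ => γ0 := funext hΓ0
      rw [this]; exact measurable_const
    | succ t ih =>
      have : Γ (t+1) = fun x => (1 - α t) * Γ t x + α t * ω t x := funext (hΓ t)
      rw [this]
      exact (measurable_const.mul ih).add (measurable_const.mul (hmeas t))
  -- a.e. range of Γ
  have hΓrange : ∀ t, ∀ᵐ x ∂P, Γ t x ∈ Set.Icc (0 : ℝ) 1 := by
    intro t
    induction t with
    | zero =>
      filter_upwards with x
      rw [hΓ0 x]; exact hγ0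
    | succ t ih =>
      filter_upwards [ih, hrange t] with x hx hωx
      rw [hΓ t x]
      obtain ⟨h1, h2⟩ := hx
      obtain ⟨h3, h4⟩ := hωx
      obtain ⟨h5, h6⟩ := hα t
      constructor
      · nlinarith
      · nlinarith
  -- integrability of ω
  have hintω : ∀ t, Integrable (ω t) P := by
    intro t
    refine Integrable.mono' (integrable_const 1) (hmeas t).aestronglyMeasurable ?_
    filter_upwards [hrange t] with x hx
    rw [Real.norm_eq_abs, abs_le]; exact ⟨by linarith [hx.1], hx.2⟩
  -- μ ∈ [0,1]
  have hμ01 : μ ∈ Set.Icc (0 : ℝ) 1 := by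
    constructor
    · rw [← hmean 0]
      apply integral_nonneg_of_ae
      filter_upwards [hrange 0] with x hx using hx.1
    · rw [← hmean 0]
      calc ∫ x, ω 0 x ∂P ≤ ∫ _, (1:ℝ) ∂P := by
            apply integral_mono_ae (hintω 0) (integrable_const 1)
            filter_upwards [hrange 0] with x hx using hx.2
        _ = 1 := by simp
  -- squared deviations are bounded by 1 a.e.
  have hΓdev : ∀ t, ∀ᵐ x ∂P, |Γ t x - μ| ≤ 1 := by
    intro t
    filter_upwards [hΓrange t] with x hx
    rw [abs_le]
    constructor
    · linarith [hx.1, hμ01.2]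
    · linarith [hx.2, hμ01.1]
  have hωdev : ∀ t, ∀ᵐ x ∂P, |ω t x - μ| ≤ 1 := by
    intro t
    filter_upwards [hrange t] with x hx
    rw [abs_le]
    constructor
    · linarith [hx.1, hμ01.2]
    · linarith [hx.2, hμ01.1]
  -- integrability helpers
  have hintΓ : ∀ t, Integrable (Γ t) P := by
    intro t
    refine Integrable.mono' (integrable_const 1) (hmeasΓ t).aestronglyMeasurable ?_
    filter_upwards [hΓrange t] with x hx
    rw [Real.norm_eq_abs, abs_le]; exact ⟨by linarith [hx.1], hx.2⟩
  have hintΓsq : ∀ t, Integrable (fun x => (Γ t x - μ)^2) P := by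
    intro t
    refine Integrable.mono' (integrable_const 1)
      (((hmeasΓ t).sub measurable_const).pow_const 2).aestronglyMeasurable ?_
    filter_upwards [hΓdev t] with x hx
    rw [Real.norm_eq_abs, abs_pow]
    calc |Γ t x - μ|^2 ≤ 1^2 := pow_le_pow_left₀ (abs_nonneg _) hx 2
      _ = 1 := one_pow 2
  have hintωsq : ∀ t, Integrable (fun x => (ω t x - μ)^2) P := by
    intro t
    refine Integrable.mono' (integrable_const 1)
      (((hmeas t).sub measurable_const).pow_const 2).aestronglyMeasurable ?_
    filter_upwards [hωdev t] with x hx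
    rw [Real.norm_eq_abs, abs_pow]
    calc |ω t x - μ|^2 ≤ 1^2 := pow_le_pow_left₀ (abs_nonneg _) hx 2
      _ = 1 := one_pow 2
  have hintcross : ∀ t, Integrable (fun x => (Γ t x - μ) * (ω t x - μ)) P := by
    intro t
    refine Integrable.mono' (integrable_const 1)
      (((hmeasΓ t).sub measurable_const).mul ((hmeas t).sub measurable_const)).aestronglyMeasurable ?_
    filter_upwards [hΓdev t, hωdev t] with x h1 h2
    rw [Real.norm_eq_abs, abs_mul]
    calc |Γ t x - μ| * |ω t x - μ| ≤ 1 * 1 :=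
        mul_le_mul h1 h2 (abs_nonneg _) zero_le_one
      _ = 1 := one_mul 1
  -- cross term vanishes
  have hcross : ∀ t, ∫ x, (Γ t x - μ) * (ω t x - μ) ∂P = 0 := by
    intro t
    have hind := gw_indep P ω hmeas hindep α γ0 Γ hΓ0 hΓ t
    have hind' : IndepFun (fun x => Γ t x - μ) (fun x => ω t x - μ) P :=
      hind.comp (measurable_id.sub measurable_const) (measurable_id.sub measurable_const)
    have h1 : Integrable (fun x => Γ t x - μ) P := (hintΓ t).sub (integrable_const μ)
    have h2 : Integrable (fun x => ω t x - μ) P := (hintω t).sub (integrable_const μ)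
    have := hind'.integral_mul_eq_mul_integral h1.aestronglyMeasurable h2.aestronglyMeasurable
    have hz : ∫ x, (ω t x - μ) ∂P = 0 := by
      rw [integral_sub (hintω t) (integrable_const μ), hmean t]
      simp
    calc ∫ x, (Γ t x - μ) * (ω t x - μ) ∂P
        = ∫ x, ((fun x => Γ t x - μ) * (fun x => ω t x - μ)) x ∂P := rfl
      _ = (∫ x, (Γ t x - μ) ∂P) * ∫ x, (ω t x - μ) ∂P := this
      _ = 0 := by rw [hz, mul_zero]
  -- the recursion in expectation
  have hrec : ∀ t, ∫ x, (Γ (t+1) x - μ)^2 ∂P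
      ≤ (1 - α t) * (∫ x, (Γ t x - μ)^2 ∂P) + (α t)^2 := by
    intro t
    have hptwise : (fun x => (Γ (t+1) x - μ)^2)
        = fun x => (1 - α t)^2 * (Γ t x - μ)^2
          + ((α t)^2 * (ω t x - μ)^2
            + 2 * (1 - α t) * α t * ((Γ t x - μ) * (ω t x - μ))) := by
      funext x
      rw [hΓ t x]
      ring
    have hint2 : Integrable (fun x => (α t)^2 * (ω t x - μ)^2
        + 2 * (1 - α t) * α t * ((Γ t x - μ) * (ω t x - μ))) P :=
      ((hintωsq t).const_mul _).add ((hintcross t).const_mul _)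
    have heq : ∫ x, (Γ (t+1) x - μ)^2 ∂P
        = (1 - α t)^2 * (∫ x, (Γ t x - μ)^2 ∂P) + (α t)^2 * ∫ x, (ω t x - μ)^2 ∂P := by
      rw [hptwise, integral_add ((hintΓsq t).const_mul _) hint2,
        integral_add ((hintωsq t).const_mul _) ((hintcross t).const_mul _),
        integral_const_mul, integral_const_mul, integral_const_mul, hcross t]
      ring
    have hωvar : ∫ x, (ω t x - μ)^2 ∂P ≤ 1 := by
      calc ∫ x, (ω t x - μ)^2 ∂P ≤ ∫ _, (1:ℝ) ∂P := by
            apply integral_mono_ae (hintωsq t) (integrable_const 1)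
            filter_upwards [hωdev t] with x hx
            calc (ω t x - μ)^2 = |ω t x - μ|^2 := (sq_abs _).symm
              _ ≤ 1^2 := pow_le_pow_left₀ (abs_nonneg _) hx 2
              _ = 1 := one_pow 2
        _ = 1 := by simp
    have he0 : 0 ≤ ∫ x, (Γ t x - μ)^2 ∂P := integral_nonneg fun x => sq_nonneg _
    obtain ⟨ha0, ha1⟩ := hα t
    have hsq' : 0 ≤ (α t)^2 := sq_nonneg _
    rw [heq]
    nlinarith [mul_nonneg (mul_nonneg (sub_nonneg.mpr ha1.le) ha0.le) he0,
      mul_nonneg hsq' (sub_nonneg.mpr hωvar)]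
  exact rm_aux_tendsto_zero α (fun t => (α t)^2) (fun t => ∫ x, (Γ t x - μ)^2 ∂P)
    hα hdiv (fun t => sq_nonneg _) hsq
    (fun t => integral_nonneg fun x => sq_nonneg _) hrec
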